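/- arXiv:math/0405069 — 4 statements merged into one kernel-verified Lean document; each statement's English description precedes it below -/
import Mathlib

section
/- Let K be a field complete with respect to a nonarchimedean absolute value. For a Laurent series x = Σ_J c_J t^J in n variables convergent on the polyannulus with radii in an aligned interval I, and for tuples A = (a_1,...,a_n), B = (b_1,...,b_n) in I^n and c ∈ [0,1], setting r_i = a_i^c · b_i^(1-c), one has |x|_R ≤ |x|_A^c · |x|_B^(1-c), where |x|_R = sup_J |c_J| r_1^{j_1}···r_n^{j_n}. -/
open Filter Topology

/-- The Gauss norm `|x|_R = sup_J ‖c_J‖ · R_1^{j_1} ⋯ R_n^{j_n}` of a Laurent series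
`x = Σ_J c_J t^J` in `n` variables, valued in `ℝ≥0∞`. -/
noncomputable def gaussNorm {K : Type*} [NormedField K] {n : ℕ}
    (c : (Fin n → ℤ) → K) (R : Fin n → ENNReal) : ENNReal :=
  ⨆ J : Fin n → ℤ, (‖c J‖₊ : ENNReal) * ∏ i : Fin n, R i ^ (J i)

/-- Nonarchimedean Hadamard three circles: for a Laurent series convergent on the
polyannulus with radii in an aligned interval `I`, tuples `A, B ∈ Iⁿ`, `t ∈ [0,1]`,
and `R_i = A_i^t · B_i^(1-t)`, one has `|x|_R ≤ |x|_A^t · |x|_B^(1-t)`. -/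
theorem hadamard_three_circles
    {K : Type*} [NormedField K]
    (hna : ∀ x y : K, ‖x + y‖ ≤ max ‖x‖ ‖y‖)
    {n : ℕ} (I : Set ℝ) (hI : I ⊆ Set.Ici (0 : ℝ))
    (c : (Fin n → ℤ) → K)
    (hconv : ∀ ρ : Fin n → ℝ, (∀ i, ρ i ∈ I) →
      Tendsto (fun J : Fin n → ℤ => ‖c J‖ * ∏ i : Fin n, ρ i ^ (J i))
        cofinite (nhds 0))
    (hsupp : (0 : ℝ) ∈ I → ∀ J : Fin n → ℤ, (∃ i, J i < 0) → c J = 0)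
    (A B : Fin n → ℝ) (hA : ∀ i, A i ∈ I) (hB : ∀ i, B i ∈ I)
    (t : ℝ) (ht : t ∈ Set.Icc (0 : ℝ) 1)
    (R : Fin n → ℝ) (hR : ∀ i, R i = A i ^ t * B i ^ (1 - t)) :
    gaussNorm c (fun i => ENNReal.ofReal (R i)) ≤
      gaussNorm c (fun i => ENNReal.ofReal (A i)) ^ t *
      gaussNorm c (fun i => ENNReal.ofReal (B i)) ^ (1 - t) := by
  obtain ⟨ht0, ht1⟩ := ht
  have ht1' : (0:ℝ) ≤ 1 - t := by linarith
  refine iSup_le fun J => ?_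
  by_cases hc : c J = 0
  · simp [hc]
  set x : ENNReal := (‖c J‖₊ : ENNReal) with hx
  have hx0 : x ≠ 0 := by simp [hx, hc]
  have hxtop : x ≠ ⊤ := ENNReal.coe_ne_top
  -- finiteness of zpow factors
  have key : ∀ (C : Fin n → ℝ), (∀ i, C i ∈ I) →
      ∀ i, (ENNReal.ofReal (C i)) ^ (J i) ≠ ⊤ := by
    intro C hC i
    rcases lt_or_ge (J i) 0 with hJ | hJ
    · have hCi : C i ≠ 0 := fun h0 => hc (hsupp (h0 ▸ hC i) J ⟨i, hJ⟩)
      have h1 : ENNReal.ofReal (C i) ≠ 0 := by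
        simp only [ne_eq, ENNReal.ofReal_eq_zero, not_le]
        exact lt_of_le_of_ne (hI (hC i)) (Ne.symm hCi)
      exact (ENNReal.zpow_lt_top h1 ENNReal.ofReal_ne_top _).ne
    · lift J i to ℕ using hJ with m hm
      rw [zpow_natCast]
      exact ENNReal.pow_ne_top ENNReal.ofReal_ne_top
  have hAfin := key A hA
  have hBfin := key B hB
  -- pointwise identity per coordinate
  have hcoord : ∀ i, (ENNReal.ofReal (R i)) ^ (J i)
      = ((ENNReal.ofReal (A i)) ^ (J i)) ^ t * ((ENNReal.ofReal (B i)) ^ (J i)) ^ (1 - t) := by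
    intro i
    have hAnn : (0:ℝ) ≤ A i := hI (hA i)
    have hBnn : (0:ℝ) ≤ B i := hI (hB i)
    have h1 : ENNReal.ofReal (R i)
        = (ENNReal.ofReal (A i)) ^ t * (ENNReal.ofReal (B i)) ^ (1 - t) := by
      rw [hR i, ENNReal.ofReal_mul (Real.rpow_nonneg hAnn t),
        ENNReal.ofReal_rpow_of_nonneg hAnn ht0,
        ENNReal.ofReal_rpow_of_nonneg hBnn ht1']
    rw [h1, ← ENNReal.rpow_intCast _ (J i),
      ENNReal.mul_rpow_of_ne_top
        (ENNReal.rpow_ne_top_of_nonneg ht0 ENNReal.ofReal_ne_top)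
        (ENNReal.rpow_ne_top_of_nonneg ht1' ENNReal.ofReal_ne_top),
      ← ENNReal.rpow_mul, ← ENNReal.rpow_mul, mul_comm t, mul_comm (1-t),
      ENNReal.rpow_mul, ENNReal.rpow_mul, ENNReal.rpow_intCast, ENNReal.rpow_intCast]
  -- the full pointwise identity
  have hmain : x * ∏ i : Fin n, (ENNReal.ofReal (R i)) ^ (J i)
      = (x * ∏ i : Fin n, (ENNReal.ofReal (A i)) ^ (J i)) ^ t
        * (x * ∏ i : Fin n, (ENNReal.ofReal (B i)) ^ (J i)) ^ (1 - t) := by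
    rw [ENNReal.mul_rpow_of_ne_top hxtop (ENNReal.prod_ne_top fun i _ => hAfin i),
      ENNReal.mul_rpow_of_ne_top hxtop (ENNReal.prod_ne_top fun i _ => hBfin i),
      ← ENNReal.prod_rpow_of_ne_top (fun i _ => hAfin i),
      ← ENNReal.prod_rpow_of_ne_top (fun i _ => hBfin i),
      mul_mul_mul_comm, ← ENNReal.rpow_add _ _ hx0 hxtop, add_sub_cancel,
      ENNReal.rpow_one, ← Finset.prod_mul_distrib]
    congr 1
    exact Finset.prod_congr rfl fun i _ => hcoord i
  rw [hmain]
  have hle1 : x * ∏ i : Fin n, (ENNReal.ofReal (A i)) ^ (J i)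
      ≤ gaussNorm c (fun i => ENNReal.ofReal (A i)) :=
    le_iSup (fun J : Fin n → ℤ => (‖c J‖₊ : ENNReal) * ∏ i : Fin n, (ENNReal.ofReal (A i)) ^ (J i)) J
  have hle2 : x * ∏ i : Fin n, (ENNReal.ofReal (B i)) ^ (J i)
      ≤ gaussNorm c (fun i => ENNReal.ofReal (B i)) :=
    le_iSup (fun J : Fin n → ℤ => (‖c J‖₊ : ENNReal) * ∏ i : Fin n, (ENNReal.ofReal (B i)) ^ (J i)) J
  exact mul_le_mul' (ENNReal.rpow_le_rpow hle1 ht0) (ENNReal.rpow_le_rpow hle2 ht1')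
end

section
/- Let A be an integral domain, let t_1, ..., t_n ∈ A (n ≥ 2) be such that dt_1, ..., dt_n freely generate the module of Kähler differentials Ω^1_{A/B} over a subring B, and set A' = A[t_1/t_2, t_2/t_1] (inside the fraction field of A). Then Ω^1_{A'/B} is freely generated by d(t_1/t_2), dt_2, ..., dt_n. -/
set_option synthInstance.maxHeartbeats 1000000
set_option maxHeartbeats 1000000

open TrivSqZeroExt in
theorem exists_derivation_extension_of_isFractionRing
    {B A : Type*} {K M : Type*} [CommRing B] [CommRing A] [IsDomain A] [Field K]
    [Algebra B A] [Algebra A K] [IsFractionRing A K] [Algebra B K] [IsScalarTower B A K]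
    [AddCommGroup M] [Module K M] [Module Kᵐᵒᵖ M] [IsCentralScalar K M]
    [Module A M] [IsScalarTower A K M] [Module B M] [IsScalarTower B K M]
    (d : Derivation B A M) :
    ∃ D : Derivation B K M, ∀ a : A, D (algebraMap A K a) = d a := by
  have inj := IsFractionRing.injective A K
  let F0 : A →+* TrivSqZeroExt K M :=
  { toFun := fun a => inl (algebraMap A K a) + inr (d a)
    map_one' := by
      refine TrivSqZeroExt.ext ?_ ?_ <;>
        simp
    map_mul' := fun a b => by
      refine TrivSqZeroExt.ext ?_ ?_ <;>
        simp [op_smul_eq_smul, algebraMap_smul, mul_comm, add_comm]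
    map_zero' := by
      refine TrivSqZeroExt.ext ?_ ?_ <;> simp
    map_add' := fun a b => by
      refine TrivSqZeroExt.ext ?_ ?_ <;> simp [add_comm, add_left_comm] }
  have hF0fst : ∀ a : A, (F0 a).fst = algebraMap A K a := fun a => by simp [F0]
  have hF0snd : ∀ a : A, (F0 a).snd = d a := fun a => by simp [F0]
  have hunit : ∀ s : nonZeroDivisors A, IsUnit (F0 s) := by
    intro s
    rw [isUnit_iff_isUnit_fst, hF0fst]
    exact isUnit_iff_ne_zero.mpr ((map_ne_zero_iff _ inj).mpr (nonZeroDivisors.ne_zero s.2))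
  let F : K →+* TrivSqZeroExt K M := IsLocalization.lift (M := nonZeroDivisors A) hunit
  have hF : ∀ a : A, F (algebraMap A K a) = F0 a := fun a => IsLocalization.lift_eq hunit a
  have hfst : ∀ x : K, (F x).fst = x := by
    have : ((fstHom K K M : TrivSqZeroExt K M →ₐ[K] K) : TrivSqZeroExt K M →+* K).comp F
        = RingHom.id K := by
      apply IsLocalization.ringHom_ext (nonZeroDivisors A)
      ext a
      simp [F, hF, hF0fst, IsLocalization.lift_eq]
    intro x
    exact RingHom.congr_fun this x
  have hB : ∀ bb : B, F (algebraMap B K bb) = inl (algebraMap B K bb) := by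
    intro bb
    rw [IsScalarTower.algebraMap_apply B A K, hF]
    refine TrivSqZeroExt.ext ?_ ?_
    · rw [hF0fst, ← IsScalarTower.algebraMap_apply B A K]; simp
    · rw [hF0snd, Derivation.map_algebraMap]; simp
  refine ⟨{ toFun := fun x => (F x).snd
            map_add' := fun x y => by show (F (x+y)).snd = (F x).snd + (F y).snd; rw [map_add]; rfl
            map_smul' := fun bb x => by
              have : (bb : B) • x = algebraMap B K bb * x := Algebra.smul_def bb x
              rw [RingHom.id_apply]
              show (F (bb • x)).snd = bb • (F x).snd
              rw [this, map_mul, snd_mul, hB, hfst, fst_inl, snd_inl,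
                op_smul_eq_smul, smul_zero, add_zero]
              exact algebraMap_smul K bb (F x).snd
            map_one_eq_zero' := by
              show (F 1).snd = 0
              rw [map_one]; rfl
            leibniz' := fun x y => by
              show (F (x * y)).snd = x • (F y).snd + y • (F x).snd
              rw [map_mul, snd_mul, hfst, hfst, op_smul_eq_smul, add_comm]
              },
        fun a => by show (F (algebraMap A K a)).snd = d a; rw [hF, hF0snd]⟩

/-- Let `A` be an integral domain with `dt_1, …, dt_n` (n ≥ 2) a free basis of
`Ω¹_{A/B}`, and let `A' = A[t_1/t_2, t_2/t_1]` inside the fraction field of `A`.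
Then `Ω¹_{A'/B}` is freely generated by `d(t_1/t_2), dt_2, …, dt_n`.
(Here the indices are `0, 1, …, n+1` with `n + 2` variables, so `t 0 / t 1` plays
the role of `t_1/t_2`.) -/
theorem kaehler_differentials_of_blowup_chart
    {B A : Type*} [CommRing B] [CommRing A] [IsDomain A] [Algebra B A]
    (hinj : Function.Injective (algebraMap B A))
    {n : ℕ} (t : Fin (n + 2) → A)
    (e : Module.Basis (Fin (n + 2)) A (KaehlerDifferential B A))
    (he : ∀ i, e i = KaehlerDifferential.D B A (t i))
    (K : Type*) [Field K] [Algebra A K] [IsFractionRing A K]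
    [Algebra B K] [IsScalarTower B A K]
    (A' : Subalgebra B K)
    (hA' : A' = Algebra.adjoin B (Set.range (algebraMap A K) ∪
      {algebraMap A K (t 0) / algebraMap A K (t 1),
       algebraMap A K (t 1) / algebraMap A K (t 0)}))
    (hu : algebraMap A K (t 0) / algebraMap A K (t 1) ∈ A')
    (ht : ∀ i : Fin (n + 2), algebraMap A K (t i) ∈ A') :
    ∃ b : Module.Basis (Fin (n + 2)) A' (KaehlerDifferential B A'),
      b 0 = KaehlerDifferential.D B A'
        (⟨algebraMap A K (t 0) / algebraMap A K (t 1), hu⟩ : A') ∧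
      ∀ i : Fin (n + 2), i ≠ 0 →
        b i = KaehlerDifferential.D B A' (⟨algebraMap A K (t i), ht i⟩ : A') := by
  classical
  have inj := IsFractionRing.injective A K
  have h10 : (1 : Fin (n + 2)) ≠ 0 := Fin.ne_of_val_ne (by simp)
  set u : K := algebraMap A K (t 0) / algebraMap A K (t 1) with hu_def
  have htne : ∀ i, t i ≠ 0 := by
    intro i h
    exact e.ne_zero i (by rw [he i, h, map_zero])
  have hτne : ∀ i, algebraMap A K (t i) ≠ 0 :=
    fun i => (map_ne_zero_iff _ inj).mpr (htne i)
  have hune : u ≠ 0 := div_ne_zero (hτne 0) (hτne 1)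
  have hu_mul : u * algebraMap A K (t 1) = algebraMap A K (t 0) :=
    div_mul_cancel₀ _ (hτne 1)
  -- the standard "basis" functions
  let δ : Fin (n + 2) → (Fin (n + 2) → K) := fun j => Pi.single j 1
  have hδ : ∀ j i, δ j i = if i = j then 1 else 0 := by
    intro j i
    by_cases h : i = j
    · subst h
      rw [if_pos rfl]
      exact Pi.single_eq_same (M := fun _ : Fin (n + 2) => K) i 1
    · rw [if_neg h]
      exact Pi.single_eq_of_ne (M := fun _ : Fin (n + 2) => K) h 1
  -- the A-derivation valued in `Fin (n+2) → K` giving the coordinates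
  let g : KaehlerDifferential B A →ₗ[A] (Fin (n + 2) → K) :=
    LinearMap.pi fun i => (Algebra.linearMap A K).comp (e.coord i)
  let d : Derivation B A (Fin (n + 2) → K) := g.compDer (KaehlerDifferential.D B A)
  have hd : ∀ j, d (t j) = δ j := by
    intro j
    funext i
    have h1 : KaehlerDifferential.D B A (t j) = e j := (he j).symm
    have h2 : d (t j) i = algebraMap A K (e.repr (e j) i) := by
      simp [d, g, h1, Module.Basis.coord_apply]
    rw [h2, e.repr_self, hδ, Finsupp.single_apply]
    by_cases h : i = j
    · subst h; simp
    · rw [if_neg (Ne.symm h), if_neg h, map_zero]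
  obtain ⟨Dk, hDk⟩ := exists_derivation_extension_of_isFractionRing (K := K)
    (M := Fin (n + 2) → K) d
  have hDτ : ∀ j, Dk (algebraMap A K (t j)) = δ j := fun j => (hDk (t j)).trans (hd j)
  -- the change-of-basis linear map
  let L : (Fin (n + 2) → K) →ₗ[K] (Fin (n + 2) → K) :=
    LinearMap.pi (fun i : Fin (n + 2) =>
      if i = 0 then algebraMap A K (t 1) • LinearMap.proj (0 : Fin (n + 2))
      else if i = 1 then LinearMap.proj (1 : Fin (n + 2)) + u • LinearMap.proj (0 : Fin (n + 2))
      else LinearMap.proj i)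
  have hLapp : ∀ (z : Fin (n + 2) → K) (i : Fin (n + 2)), L z i
      = if i = 0 then algebraMap A K (t 1) * z 0
        else if i = 1 then z 1 + u * z 0 else z i := by
    intro z i
    rw [LinearMap.pi_apply]
    split_ifs with h0 h1
    · subst h0; rw [LinearMap.smul_apply, LinearMap.proj_apply, smul_eq_mul]
    · subst h1; rw [LinearMap.add_apply, LinearMap.smul_apply, LinearMap.proj_apply,
        LinearMap.proj_apply, smul_eq_mul]
    · rw [LinearMap.proj_apply]
  let Dfin : Derivation B K (Fin (n + 2) → K) := L.compDer Dk
  have hDfin : ∀ x : K, Dfin x = L (Dk x) := fun x => rfl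
  have hLsingle : ∀ j : Fin (n + 2), j ≠ 0 → L (δ j) = δ j := by
    intro j hj
    have hδ0 : δ j 0 = 0 := by rw [hδ, if_neg (fun h => hj h.symm)]
    funext i
    rw [hLapp, hδ0, mul_zero, mul_zero, add_zero]
    split_ifs with h0 h1
    · subst h0; exact hδ0.symm
    · subst h1; rfl
    · rfl
  have e00 : δ (0 : Fin (n + 2)) 0 = 1 := by rw [hδ, if_pos rfl]
  have e01 : δ (0 : Fin (n + 2)) 1 = 0 := by rw [hδ, if_neg h10]
  have e10 : δ (1 : Fin (n + 2)) 0 = 0 := by rw [hδ, if_neg (Ne.symm h10)]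
  have e11 : δ (1 : Fin (n + 2)) 1 = 1 := by rw [hδ, if_pos rfl]
  have hL0 : L (δ 0) = algebraMap A K (t 1) • δ 0 + u • δ 1 := by
    funext i
    rw [hLapp, Pi.add_apply, Pi.smul_apply, Pi.smul_apply, smul_eq_mul, smul_eq_mul]
    split_ifs with h0 h1
    · subst h0
      simp [e00, e10]
    · subst h1
      simp [e01, e00, e11]
    · simp [hδ, h0, h1]
  have hDfinτ : ∀ j : Fin (n + 2), j ≠ 0 →
      Dfin (algebraMap A K (t j)) = δ j := by
    intro j hj
    rw [hDfin, hDτ j, hLsingle j hj]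
  have hDfinu : Dfin u = δ 0 := by
    have h1 : Dk (u * algebraMap A K (t 1))
        = u • Dk (algebraMap A K (t 1)) + algebraMap A K (t 1) • Dk u := Dk.leibniz _ _
    rw [hu_mul, hDτ 0, hDτ 1] at h1
    have key : algebraMap A K (t 1) • Dk u = δ 0 - u • δ 1 := by
      rw [eq_sub_iff_add_eq, h1]
      exact add_comm _ _
    have h2 : algebraMap A K (t 1) • Dfin u = algebraMap A K (t 1) • δ 0 := by
      rw [hDfin, ← map_smul, key, map_sub, map_smul, hL0, hLsingle 1 h10]
      exact add_sub_cancel_right _ _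
    exact smul_right_injective _ (hτne 1) h2
  -- membership of the image of A in A'
  have hmem : ∀ a : A, algebraMap A K a ∈ A' := by
    intro a
    rw [hA']
    exact Algebra.subset_adjoin (Or.inl ⟨a, rfl⟩)
  let φ : A →ₐ[B] A' := (IsScalarTower.toAlgHom B A K).codRestrict A' hmem
  letI : Algebra A A' := φ.toAlgebra
  haveI : IsScalarTower B A A' := IsScalarTower.of_algebraMap_eq fun b => (φ.commutes b).symm
  haveI : SMulCommClass B A A' := ⟨fun b a x => by
    rw [Algebra.smul_def, Algebra.smul_def (A := A'), Algebra.smul_def, Algebra.smul_def (A := A'),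
      mul_left_comm]⟩
  -- the candidate basis vectors
  let w : Fin (n + 2) → A' := fun i => if i = 0 then (⟨u, hu⟩ : A')
    else ⟨algebraMap A K (t i), ht i⟩
  have hw0 : w 0 = ⟨u, hu⟩ := if_pos rfl
  have hwi : ∀ i, i ≠ 0 → w i = ⟨algebraMap A K (t i), ht i⟩ := fun i hi => if_neg hi
  let v : Fin (n + 2) → KaehlerDifferential B A' := fun i => KaehlerDifferential.D B A' (w i)
  have hv : ∀ i, v i = KaehlerDifferential.D B A' (w i) := fun i => rfl
  -- lift of the derivation to A'
  let DA' : Derivation B A' (Fin (n + 2) → K) := Dfin.compAlgebraMap A'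
  let ℓ : KaehlerDifferential B A' →ₗ[A'] (Fin (n + 2) → K) := DA'.liftKaehlerDifferential
  have hℓ : ∀ x : A', ℓ (KaehlerDifferential.D B A' x) = Dfin (x : K) :=
    fun x => DA'.liftKaehlerDifferential_comp_D x
  have hℓv : ∀ i, ℓ (v i) = δ i := by
    intro i
    rw [hv, hℓ]
    by_cases h : i = 0
    · subst h
      rw [hw0]
      exact hDfinu
    · rw [hwi i h]
      exact hDfinτ i h
  have hli : LinearIndependent A' v := by
    rw [Fintype.linearIndependent_iff]
    intro c hc j
    have h2 : (∑ i, c i • δ i) = (0 : Fin (n + 2) → K) := by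
      have h3 := congrArg ℓ hc
      rw [map_sum, map_zero] at h3
      simpa only [map_smul, hℓv] using h3
    have h3 := congrFun h2 j
    rw [Finset.sum_apply] at h3
    rw [Finset.sum_eq_single j (fun i _ hij => by
      rw [Pi.smul_apply, hδ, if_neg (Ne.symm hij), smul_zero]) (by simp)] at h3
    rw [Pi.smul_apply, hδ, if_pos rfl, Algebra.smul_def, mul_one] at h3
    exact (Subalgebra.coe_eq_zero A').mp h3
  -- spanning
  set sp : Submodule A' (KaehlerDifferential B A') := Submodule.span A' (Set.range v) with hsp_def
  have hv0 : KaehlerDifferential.D B A' (⟨u, hu⟩ : A') ∈ sp := by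
    apply Submodule.subset_span
    exact ⟨0, by rw [hv, hw0]⟩
  have hvj : ∀ j : Fin (n + 2), j ≠ 0 →
      KaehlerDifferential.D B A' (⟨algebraMap A K (t j), ht j⟩ : A') ∈ sp := by
    intro j hj
    apply Submodule.subset_span
    exact ⟨j, by rw [hv, hwi j hj]⟩
  have hvall : ∀ j, KaehlerDifferential.D B A' (⟨algebraMap A K (t j), ht j⟩ : A') ∈ sp := by
    intro j
    by_cases hj : j = 0
    · subst hj
      have hmul : (⟨algebraMap A K (t 0), ht 0⟩ : A')
          = (⟨u, hu⟩ : A') * ⟨algebraMap A K (t 1), ht 1⟩ := by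
        ext
        exact hu_mul.symm
      rw [hmul, Derivation.leibniz]
      exact add_mem (Submodule.smul_mem _ _ (hvj 1 h10)) (Submodule.smul_mem _ _ hv0)
    · exact hvj j hj
  have hφval : ∀ a : A, ((algebraMap A A' a : A') : K) = algebraMap A K a := fun a => rfl
  have hDφ : ∀ a : A, KaehlerDifferential.D B A' (algebraMap A A' a) ∈ sp := by
    intro a
    have h1 : KaehlerDifferential.D B A' (algebraMap A A' a)
        = KaehlerDifferential.map B B A A' (KaehlerDifferential.D B A a) :=
      (KaehlerDifferential.map_D B B A A' a).symm
    rw [h1, ← Module.Basis.sum_repr e (KaehlerDifferential.D B A a), map_sum]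
    apply Submodule.sum_mem
    intro i _
    rw [map_smul, ← algebraMap_smul A' (e.repr (KaehlerDifferential.D B A a) i)
      (KaehlerDifferential.map B B A A' (e i))]
    apply Submodule.smul_mem
    rw [he i, KaehlerDifferential.map_D]
    have h3 : (algebraMap A A' (t i)) = (⟨algebraMap A K (t i), ht i⟩ : A') :=
      Subtype.ext (hφval (t i))
    rw [h3]
    exact hvall i
  have hspan : ⊤ ≤ Submodule.span A' (Set.range v) := by
    rw [← KaehlerDifferential.span_range_derivation B A', Submodule.span_le]
    rintro _ ⟨x, rfl⟩
    rw [SetLike.mem_coe, ← hsp_def]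
    obtain ⟨y, hy⟩ := x
    have hy' : y ∈ Algebra.adjoin B (Set.range (algebraMap A K) ∪
        {u, algebraMap A K (t 1) / algebraMap A K (t 0)}) := by
      rw [← hA']; exact hy
    refine Algebra.adjoin_induction
      (p := fun z _ => ∀ hz' : z ∈ A', KaehlerDifferential.D B A' ⟨z, hz'⟩ ∈ sp)
      ?_ ?_ ?_ ?_ hy' hy
    · rintro z (⟨a, rfl⟩ | hz2)
      · intro hz'
        have h4 : (⟨algebraMap A K a, hz'⟩ : A') = algebraMap A A' a := Subtype.ext rfl
        rw [h4]
        exact hDφ a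
      · rcases hz2 with rfl | rfl
        · intro hz'
          exact hv0
        · intro hz'
          set W : A' := ⟨algebraMap A K (t 1) / algebraMap A K (t 0), hz'⟩ with hW_def
          have hW : (⟨u, hu⟩ : A') * W = 1 := by
            ext
            show u * (algebraMap A K (t 1) / algebraMap A K (t 0)) = 1
            rw [hu_def, div_mul_div_comm,
              mul_comm (algebraMap A K (t 1)) (algebraMap A K (t 0))]
            exact div_self (mul_ne_zero (hτne 0) (hτne 1))
          have h0 : (⟨u, hu⟩ : A') • KaehlerDifferential.D B A' W
              + W • KaehlerDifferential.D B A' ⟨u, hu⟩ = 0 := by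
            rw [← Derivation.leibniz, hW, Derivation.map_one_eq_zero]
          have h4 : KaehlerDifferential.D B A' W
              = W • ((⟨u, hu⟩ : A') • KaehlerDifferential.D B A' W) := by
            rw [smul_smul, mul_comm, hW, one_smul]
          rw [h4, eq_neg_of_add_eq_zero_left h0, smul_neg]
          exact neg_mem (Submodule.smul_mem _ _ (Submodule.smul_mem _ _ hv0))
    · intro b hz'
      have h4 : (⟨algebraMap B K b, hz'⟩ : A') = algebraMap B A' b := Subtype.ext rfl
      rw [h4, Derivation.map_algebraMap]
      exact zero_mem sp
    · intro x y hx hy ihx ihy hz'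
      have hx' : x ∈ A' := by rw [hA']; exact hx
      have hy'' : y ∈ A' := by rw [hA']; exact hy
      have h4 : (⟨x + y, hz'⟩ : A') = ⟨x, hx'⟩ + ⟨y, hy''⟩ := rfl
      rw [h4, map_add]
      exact add_mem (ihx hx') (ihy hy'')
    · intro x y hx hy ihx ihy hz'
      have hx' : x ∈ A' := by rw [hA']; exact hx
      have hy'' : y ∈ A' := by rw [hA']; exact hy
      have h4 : (⟨x * y, hz'⟩ : A') = (⟨x, hx'⟩ : A') * ⟨y, hy''⟩ := rfl
      rw [h4, Derivation.leibniz]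
      exact add_mem (Submodule.smul_mem _ _ (ihy hy'')) (Submodule.smul_mem _ _ (ihx hx'))
  refine ⟨Module.Basis.mk hli hspan, ?_, ?_⟩
  · rw [Module.Basis.mk_apply, hv, hw0]
  · intro i hi
    rw [Module.Basis.mk_apply, hv, hwi i hi]
end

section
/- Let N be a nilpotent n×n matrix over a complete nonarchimedean field K of residue characteristic p, with N^e = 0, and let N(t) = Σ_{i≥0} N_i t^i be a matrix of power series with N(0)·(initial coefficient) = N_0 = N, converging on |t| ≤ a with |N_i| ≤ δ a^{−i} for some δ ≥ 1. Then the unique formal power series matrix solution M = Σ M_i t^i, M_0 = I, of N(t) M + t M' = M N_0 satisfies the bound |M_i| ≤ |i!|^{−2e} a^{−i} δ^{2ei} for all i ≥ 0; in particular M converges on the disc |t| < |p|^{2e/(p−1)} a δ^{−2e}. -/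
open Filter Topology

lemma ultra_sum_le {K : Type*} [NormedField K]
    (hna : ∀ x y : K, ‖x + y‖ ≤ max ‖x‖ ‖y‖) {ι : Type*} (s : Finset ι) (f : ι → K)
    {B : ℝ} (hB : 0 ≤ B) (h : ∀ j ∈ s, ‖f j‖ ≤ B) : ‖∑ j ∈ s, f j‖ ≤ B := by
  classical
  induction s using Finset.cons_induction with
  | empty => simpa using hB
  | cons a s ha ih =>
    rw [Finset.sum_cons]
    exact le_trans (hna _ _) (max_le (h a (Finset.mem_cons_self a s))
      (ih fun j hj => h j (Finset.mem_cons_of_mem hj)))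

lemma sub_pow_eq_zero_of_commute {A : Type*} [Ring A] {x y : A} (h : Commute x y)
    {e : ℕ} (hx : x ^ e = 0) (hy : y ^ e = 0) : (x - y) ^ (2 * e - 1) = 0 := by
  rw [sub_eq_add_neg, (h.neg_right).add_pow]
  refine Finset.sum_eq_zero fun m hm => ?_
  rw [Finset.mem_range] at hm
  rcases le_or_gt e m with h1 | h1
  · rw [pow_eq_zero_of_le h1 hx, zero_mul, zero_mul]
  · have h2 : e ≤ 2 * e - 1 - m := by omega
    rw [neg_pow, pow_eq_zero_of_le h2 hy, mul_zero, mul_zero, zero_mul]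

set_option maxHeartbeats 1000000 in
/-- Bound on the fundamental solution matrix: if `N(t) = Σ N_i t^i` has `N_0`
nilpotent with `N_0^e = 0` and `‖N_i‖ ≤ δ/a^i`, then the unique formal solution
`M = Σ M_i t^i`, `M_0 = I`, of `N(t)M + tM' = M N_0` (equivalently, the recursion
`i M_i + N_0 M_i − M_i N_0 = −Σ_{j<i} N_{i−j} M_j`) satisfies
`‖M_i‖ ≤ |i!|^{−2e} δ^{2ei} / a^i`; in particular `M` converges on the disc
`|t| < |p|^{2e/(p−1)} · a · δ^{−2e}`. -/
theorem fundamental_solution_bound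
    {K : Type*} [NormedField K] [CharZero K]
    (hna : ∀ x y : K, ‖x + y‖ ≤ max ‖x‖ ‖y‖)
    (p : ℕ) (hp : p.Prime) (hpnorm : ‖(p : K)‖ < 1)
    (hint : ∀ m : ℕ, ‖(m : K)‖ ≤ 1)
    (hfact : ∀ i : ℕ, ‖(p : K)‖ ^ ((i : ℝ) / ((p : ℝ) - 1)) ≤ ‖((i.factorial : ℕ) : K)‖)
    {n : ℕ} (N : ℕ → Matrix (Fin n) (Fin n) K)
    (e : ℕ) (he : 1 ≤ e) (hNnil : N 0 ^ e = 0)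
    (a δ : ℝ) (ha : 0 < a) (hδ : 1 ≤ δ)
    (hNbound : ∀ (i : ℕ) (k l : Fin n), ‖N i k l‖ ≤ δ / a ^ i)
    (M : ℕ → Matrix (Fin n) (Fin n) K)
    (hM0 : M 0 = 1)
    (hrec : ∀ i : ℕ, 0 < i →
      (i : K) • M i + N 0 * M i - M i * N 0 = -∑ j ∈ Finset.range i, N (i - j) * M j) :
    (∀ (i : ℕ) (k l : Fin n),
        ‖M i k l‖ ≤ ‖((i.factorial : ℕ) : K)‖⁻¹ ^ (2 * e) * δ ^ (2 * e * i) / a ^ i) ∧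
    (∀ t : K, ‖t‖ < ‖(p : K)‖ ^ ((2 * (e : ℝ)) / ((p : ℝ) - 1)) * a / δ ^ (2 * e) →
      ∀ k l : Fin n,
        Tendsto (fun i : ℕ => ‖M i k l‖ * ‖t‖ ^ i) atTop (nhds 0)) := by
  have hδ0 : (0:ℝ) < δ := lt_of_lt_of_le one_pos hδ
  have hnasub : ∀ x y : K, ‖x - y‖ ≤ max ‖x‖ ‖y‖ := fun x y => by
    rw [sub_eq_add_neg]
    simpa using hna x (-y)
  -- factorial norm facts
  have hfacpos : ∀ i : ℕ, 0 < ‖((i.factorial : ℕ) : K)‖ := fun i =>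
    norm_pos_iff.mpr (Nat.cast_ne_zero.mpr i.factorial_ne_zero)
  have hfac_anti : ∀ j i : ℕ, j ≤ i →
      ‖((i.factorial : ℕ) : K)‖ ≤ ‖((j.factorial : ℕ) : K)‖ := by
    intro j i hji
    induction i, hji using Nat.le_induction with
    | base => exact le_refl _
    | succ i hji ih =>
      calc ‖(((i+1).factorial : ℕ) : K)‖
          = ‖((i+1 : ℕ) : K)‖ * ‖((i.factorial : ℕ) : K)‖ := by
            rw [Nat.factorial_succ]; push_cast; rw [norm_mul]
        _ ≤ 1 * ‖((i.factorial : ℕ) : K)‖ :=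
            mul_le_mul_of_nonneg_right (hint _) (norm_nonneg _)
        _ ≤ ‖((j.factorial : ℕ) : K)‖ := by rw [one_mul]; exact ih
  -- the ad operator
  set F : Module.End K (Matrix (Fin n) (Fin n) K) :=
    LinearMap.mulLeft K (N 0) - LinearMap.mulRight K (N 0) with hF
  have hFapply : ∀ X : Matrix (Fin n) (Fin n) K, F X = N 0 * X - X * N 0 := by
    intro X; simp [hF]
  have hFnil : F ^ (2 * e - 1) = 0 := by
    apply sub_pow_eq_zero_of_commute (LinearMap.commute_mulLeft_right (N 0) (N 0))
    · rw [LinearMap.pow_mulLeft, hNnil]; ext X : 1; simp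
    · rw [LinearMap.pow_mulRight, hNnil]; ext X : 1; simp
  -- entrywise bound for F
  have hFentry : ∀ (X : Matrix (Fin n) (Fin n) K) (β : ℝ), 0 ≤ β →
      (∀ k l, ‖X k l‖ ≤ β) → ∀ k l, ‖(F X) k l‖ ≤ δ * β := by
    intro X β hβ hX k l
    rw [hFapply]
    have hN0 : ∀ k l, ‖N 0 k l‖ ≤ δ := by
      intro k l; simpa using hNbound 0 k l
    have h1 : ‖(N 0 * X) k l‖ ≤ δ * β := by
      rw [Matrix.mul_apply]
      refine ultra_sum_le hna _ _ (by positivity) fun m _ => ?_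
      rw [norm_mul]
      exact mul_le_mul (hN0 k m) (hX m l) (norm_nonneg _) (le_trans (norm_nonneg _) (hN0 k m))
    have h2 : ‖(X * N 0) k l‖ ≤ δ * β := by
      rw [Matrix.mul_apply]
      refine ultra_sum_le hna _ _ (by positivity) fun m _ => ?_
      rw [norm_mul, mul_comm δ β]
      exact mul_le_mul (hX k m) (hN0 m l) (norm_nonneg _) hβ
    exact le_trans (by simpa [Matrix.sub_apply] using hnasub ((N 0 * X) k l) ((X * N 0) k l))
      (max_le h1 h2)
  have hFiter : ∀ (s : ℕ) (X : Matrix (Fin n) (Fin n) K) (β : ℝ), 0 ≤ β →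
      (∀ k l, ‖X k l‖ ≤ β) → ∀ k l, ‖((F ^ s) X) k l‖ ≤ δ ^ s * β := by
    intro s
    induction s with
    | zero => intro X β hβ hX k l; simpa using hX k l
    | succ s ih =>
      intro X β hβ hX k l
      have : (F ^ (s+1)) X = F ((F ^ s) X) := by
        rw [pow_succ']; rfl
      rw [this]
      have := hFentry ((F ^ s) X) (δ ^ s * β) (by positivity) (ih X β hβ hX) k l
      calc ‖(F ((F ^ s) X)) k l‖ ≤ δ * (δ ^ s * β) := this
        _ = δ ^ (s+1) * β := by ring
  -- main bound by strong induction
  have key : ∀ (i : ℕ) (k l : Fin n),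
      ‖M i k l‖ ≤ ‖((i.factorial : ℕ) : K)‖⁻¹ ^ (2 * e) * δ ^ (2 * e * i) / a ^ i := by
    intro i
    induction i using Nat.strong_induction_on with
    | _ i ih =>
      rcases Nat.eq_zero_or_pos i with rfl | hi
      · intro k l
        simp only [hM0, Nat.factorial_zero, Nat.cast_one, norm_one, inv_one, one_pow,
          Nat.mul_zero, pow_zero, mul_one, div_one]
        rw [Matrix.one_apply]
        split_ifs <;> simp
      · obtain ⟨m, rfl⟩ : ∃ m, i = m + 1 := ⟨i - 1, (Nat.succ_pred_eq_of_pos hi).symm⟩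
        intro k l
        have hR := hrec (m+1) hi
        set R : Matrix (Fin n) (Fin n) K := -∑ j ∈ Finset.range (m+1), N (m+1-j) * M j
          with hRdef
        have hkey : ((m+1 : ℕ) : K) • M (m+1) = R - F (M (m+1)) := by
          rw [hFapply, ← hR]; abel
        set ρ : ℝ := δ ^ (2*e*m+1) * ‖((m.factorial : ℕ) : K)‖⁻¹ ^ (2*e) / a ^ (m+1)
          with hρdef
        have hρ0 : 0 ≤ ρ := by positivity
        have hRbound : ∀ k l, ‖R k l‖ ≤ ρ := by
          intro k l
          rw [hRdef, Matrix.neg_apply, norm_neg, Matrix.sum_apply]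
          refine ultra_sum_le hna _ _ hρ0 fun j hj => ?_
          rw [Finset.mem_range] at hj
          have hle : δ / a ^ (m+1-j) *
              (‖((j.factorial : ℕ) : K)‖⁻¹ ^ (2*e) * δ ^ (2*e*j) / a ^ j) ≤ ρ := by
            have he1 : a ^ (m+1-j) * a ^ j = a ^ (m+1) := by
              rw [← pow_add]; congr 1; omega
            have h2 : δ / a ^ (m+1-j) *
                (‖((j.factorial : ℕ) : K)‖⁻¹ ^ (2*e) * δ ^ (2*e*j) / a ^ j)
                = δ ^ (2*e*j+1) * ‖((j.factorial : ℕ) : K)‖⁻¹ ^ (2*e) / a ^ (m+1) := by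
              rw [← he1]
              have h3 : a ^ (m+1-j) ≠ 0 := by positivity
              have h4 : a ^ j ≠ 0 := by positivity
              field_simp
              ring
            rw [h2, hρdef]
            have hinv : ‖((j.factorial : ℕ) : K)‖⁻¹ ≤ ‖((m.factorial : ℕ) : K)‖⁻¹ :=
              inv_anti₀ (hfacpos m) (hfac_anti j m (by omega))
            have t1 : δ ^ (2*e*j+1) ≤ δ ^ (2*e*m+1) := by
              refine pow_le_pow_right₀ hδ ?_
              have := Nat.mul_le_mul_left (2*e) (show j ≤ m by omega)
              omega
            have t2 : ‖((j.factorial : ℕ) : K)‖⁻¹ ^ (2*e)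
                ≤ ‖((m.factorial : ℕ) : K)‖⁻¹ ^ (2*e) :=
              pow_le_pow_left₀ (inv_nonneg.mpr (norm_nonneg _)) hinv _
            gcongr
          refine le_trans ?_ hle
          rw [Matrix.mul_apply]
          refine ultra_sum_le hna _ _ (by positivity) fun q _ => ?_
          rw [norm_mul]
          exact mul_le_mul (hNbound _ _ _) (ih j (by omega) q l) (norm_nonneg _)
            (by positivity)
        have hii : (0:ℝ) < ‖((m+1 : ℕ) : K)‖ :=
          norm_pos_iff.mpr (Nat.cast_ne_zero.mpr (Nat.succ_ne_zero m))
        have hinv1 : 1 ≤ ‖((m+1 : ℕ) : K)‖⁻¹ := by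
          simpa using inv_anti₀ hii (hint (m+1))
        have hQ : ∀ d, d ≤ 2*e-1 → ∀ k l, ‖((F ^ (2*e-1-d)) (M (m+1))) k l‖ ≤
            ‖((m+1 : ℕ) : K)‖⁻¹ ^ d * δ ^ (2*e-2) * ρ := by
          intro d
          induction d with
          | zero =>
            intro _ k l
            rw [Nat.sub_zero, hFnil]
            simp only [LinearMap.zero_apply, Matrix.zero_apply, norm_zero, pow_zero, one_mul]
            positivity
          | succ d ihd =>
            intro hd k l
            have hd' : d ≤ 2*e-1 := by omega
            set s := 2*e-1-(d+1) with hs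
            have hs1 : s + 1 = 2*e-1-d := by omega
            have hiter : ((m+1 : ℕ) : K) • (F ^ s) (M (m+1))
                = (F ^ s) R - (F ^ (s+1)) (M (m+1)) := by
              calc ((m+1 : ℕ) : K) • (F ^ s) (M (m+1))
                  = (F ^ s) (((m+1 : ℕ) : K) • M (m+1)) := (map_smul _ _ _).symm
                _ = (F ^ s) (R - F (M (m+1))) := by rw [hkey]
                _ = (F ^ s) R - (F ^ (s+1)) (M (m+1)) := by
                    rw [map_sub, ← Module.End.mul_apply, ← pow_succ]
            have hent : ((m+1 : ℕ) : K) * ((F ^ s) (M (m+1))) k l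
                = ((F ^ s) R) k l - ((F ^ (s+1)) (M (m+1))) k l := by
              have h5 := congrArg (fun X : Matrix (Fin n) (Fin n) K => X k l) hiter
              simpa [Matrix.smul_apply, Matrix.sub_apply, smul_eq_mul] using h5
            have h1 : ‖((F ^ s) R) k l‖ ≤ δ ^ (2*e-2) * ρ := by
              refine le_trans (hFiter s R ρ hρ0 hRbound k l) ?_
              exact mul_le_mul_of_nonneg_right (pow_le_pow_right₀ hδ (by omega)) hρ0
            have h2 : ‖((F ^ (s+1)) (M (m+1))) k l‖ ≤
                ‖((m+1 : ℕ) : K)‖⁻¹ ^ d * δ ^ (2*e-2) * ρ := by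
              rw [hs1]; exact ihd hd' k l
            have h3 : 1 ≤ ‖((m+1 : ℕ) : K)‖⁻¹ ^ d := one_le_pow₀ hinv1
            have hmax : ‖((m+1 : ℕ) : K)‖ * ‖((F ^ s) (M (m+1))) k l‖ ≤
                ‖((m+1 : ℕ) : K)‖⁻¹ ^ d * δ ^ (2*e-2) * ρ := by
              rw [← norm_mul, hent]
              refine le_trans (hnasub _ _) (max_le (le_trans h1 ?_) h2)
              calc δ ^ (2*e-2) * ρ = 1 * (δ ^ (2*e-2) * ρ) := (one_mul _).symm
                _ ≤ ‖((m+1 : ℕ) : K)‖⁻¹ ^ d * (δ ^ (2*e-2) * ρ) :=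
                    mul_le_mul_of_nonneg_right h3 (by positivity)
                _ = ‖((m+1 : ℕ) : K)‖⁻¹ ^ d * δ ^ (2*e-2) * ρ := by ring
            rw [show ‖((m+1 : ℕ) : K)‖⁻¹ ^ (d+1) * δ ^ (2*e-2) * ρ
                = ‖((m+1 : ℕ) : K)‖⁻¹ * (‖((m+1 : ℕ) : K)‖⁻¹ ^ d * δ ^ (2*e-2) * ρ)
                from by ring]
            rw [le_inv_mul_iff₀ hii]
            exact hmax
        have hfin := hQ (2*e-1) (le_refl _) k l
        rw [Nat.sub_self, pow_zero, Module.End.one_apply] at hfin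
        refine le_trans hfin ?_
        have hfacsplit : ‖(((m+1).factorial : ℕ) : K)‖
            = ‖((m+1 : ℕ) : K)‖ * ‖((m.factorial : ℕ) : K)‖ := by
          rw [Nat.factorial_succ]; push_cast; rw [norm_mul]
        rw [hfacsplit, mul_inv, mul_pow, hρdef]
        have harith : ‖((m+1 : ℕ) : K)‖⁻¹ ^ (2*e-1) * δ ^ (2*e-2) *
            (δ ^ (2*e*m+1) * ‖((m.factorial : ℕ) : K)‖⁻¹ ^ (2*e) / a ^ (m+1))
            = ‖((m+1 : ℕ) : K)‖⁻¹ ^ (2*e-1) * ‖((m.factorial : ℕ) : K)‖⁻¹ ^ (2*e)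
              * δ ^ (2*e*(m+1)-1) / a ^ (m+1) := by
          rw [show 2*e*(m+1)-1 = (2*e-2)+(2*e*m+1) from by
            rw [Nat.mul_add, Nat.mul_one]; omega]
          rw [pow_add]
          ring
        rw [harith]
        have u1 : ‖((m+1 : ℕ) : K)‖⁻¹ ^ (2*e-1) ≤ ‖((m+1 : ℕ) : K)‖⁻¹ ^ (2*e) :=
          pow_le_pow_right₀ hinv1 (by omega)
        have u2 : δ ^ (2*e*(m+1)-1) ≤ δ ^ (2*e*(m+1)) :=
          pow_le_pow_right₀ hδ (Nat.sub_le _ _)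
        gcongr
  refine ⟨key, ?_⟩
  intro t ht k l
  have hp0 : (0:ℝ) < ‖(p : K)‖ :=
    norm_pos_iff.mpr (Nat.cast_ne_zero.mpr hp.ne_zero)
  set c : ℝ := ‖(p : K)‖ ^ ((1:ℝ)/((p:ℝ)-1)) with hc
  have hc0 : 0 < c := Real.rpow_pos_of_pos hp0 _
  have hcpow : ∀ i : ℕ, c ^ i = ‖(p : K)‖ ^ ((i:ℝ)/((p:ℝ)-1)) := by
    intro i
    rw [hc, ← Real.rpow_natCast (‖(p : K)‖ ^ ((1:ℝ)/((p:ℝ)-1))) i, ← Real.rpow_mul hp0.le]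
    congr 1; ring
  have hdisc : ‖(p : K)‖ ^ ((2*(e:ℝ))/((p:ℝ)-1)) = c ^ (2*e) := by
    rw [hcpow (2*e)]
    congr 1; push_cast; ring
  have hcfac : ∀ i : ℕ, c ^ i ≤ ‖((i.factorial : ℕ) : K)‖ := fun i => by
    rw [hcpow]; exact hfact i
  rw [hdisc] at ht
  set r : ℝ := δ ^ (2*e) * ‖t‖ / (c ^ (2*e) * a) with hrdef
  have hr0 : 0 ≤ r := by positivity
  have hr1 : r < 1 := by
    rw [hrdef, div_lt_one (by positivity)]
    calc δ ^ (2*e) * ‖t‖ < δ ^ (2*e) * (c ^ (2*e) * a / δ ^ (2*e)) := by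
          exact mul_lt_mul_of_pos_left ht (by positivity)
      _ = c ^ (2*e) * a := by field_simp
  refine squeeze_zero (fun i => by positivity) (fun i => ?_)
    (tendsto_pow_atTop_nhds_zero_of_lt_one hr0 hr1)
  have hb := key i k l
  have hstep : ‖((i.factorial : ℕ) : K)‖⁻¹ ^ (2*e) * δ ^ (2*e*i) / a ^ i * ‖t‖ ^ i
      ≤ r ^ i := by
    have hinv : ‖((i.factorial : ℕ) : K)‖⁻¹ ≤ (c ^ i)⁻¹ :=
      inv_anti₀ (by positivity) (hcfac i)
    calc ‖((i.factorial : ℕ) : K)‖⁻¹ ^ (2*e) * δ ^ (2*e*i) / a ^ i * ‖t‖ ^ i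
        ≤ (c ^ i)⁻¹ ^ (2*e) * δ ^ (2*e*i) / a ^ i * ‖t‖ ^ i := by gcongr
      _ = r ^ i := by
          rw [hrdef, div_pow, mul_pow, mul_pow, inv_pow]
          have hcne : c ≠ 0 := ne_of_gt hc0
          have hane : a ≠ 0 := ne_of_gt ha
          field_simp
          ring
  exact le_trans (mul_le_mul_of_nonneg_right hb (pow_nonneg (norm_nonneg t) i)) hstep
end

section
/- Let A be a noetherian ring, complete with respect to the x-adic topology for some x ∈ A that is not a zero divisor, and let R be a subring of A. If B = A/xA is formally smooth over R, then there is an R-algebra isomorphism A ≅ B⟦x⟧ sending x to x, whose composition with the reduction B⟦x⟧ → B equals the quotient map A → A/xA ≅ B. -/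
universe u

section CohenAux

variable (R : Type u) {A : Type u} [CommRing R] [CommRing A] [Algebra R A]

theorem cohenNil (I : Ideal A) (n : ℕ) :
    IsNilpotent ((I ^ (n+1)).map (Ideal.Quotient.mkₐ R (I ^ (n+2)))) := by
  refine ⟨2, ?_⟩
  rw [← Ideal.map_pow, ← pow_mul, Ideal.zero_eq_bot, eq_bot_iff]
  calc Ideal.map (Ideal.Quotient.mkₐ R (I ^ (n+2))) (I ^ ((n+1)*2))
      ≤ Ideal.map (Ideal.Quotient.mkₐ R (I ^ (n+2))) (I ^ (n+2)) :=
        Ideal.map_mono (Ideal.pow_le_pow_right (by omega))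
    _ ≤ ⊥ := by
        rw [Ideal.map_le_iff_le_comap]
        intro y hy
        simp only [Ideal.mem_comap, Ideal.Quotient.mkₐ_eq_mk, Ideal.mem_bot,
          Ideal.Quotient.eq_zero_iff_mem]
        exact hy

noncomputable def cohenTower (I : Ideal A) [Algebra.FormallySmooth R (A ⧸ I)] :
    (n : ℕ) → (A ⧸ I) →ₐ[R] A ⧸ I ^ (n + 1)
  | 0 => (Ideal.quotientEquivAlgOfEq R (pow_one I).symm).toAlgHom
  | (n+1) =>
    Algebra.FormallySmooth.lift
      ((I ^ (n+1)).map (Ideal.Quotient.mkₐ R (I ^ (n+2)))) (cohenNil R I n)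
      (((DoubleQuot.quotQuotEquivQuotOfLEₐ (R := R)
          (Ideal.pow_le_pow_right (by omega : n + 1 ≤ n + 2))).symm.toAlgHom).comp
        (cohenTower I n))

theorem cohenTower_compat (I : Ideal A) [Algebra.FormallySmooth R (A ⧸ I)] (n : ℕ) (b : A ⧸ I)
    (a : A) (ha : Ideal.Quotient.mk (I ^ (n+2)) a = cohenTower R I (n+1) b) :
    Ideal.Quotient.mk (I ^ (n+1)) a = cohenTower R I n b := by
  have h := Algebra.FormallySmooth.mk_lift
      ((I ^ (n+1)).map (Ideal.Quotient.mkₐ R (I ^ (n+2)))) (cohenNil R I n)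
      (((DoubleQuot.quotQuotEquivQuotOfLEₐ (R := R)
          (Ideal.pow_le_pow_right (by omega : n + 1 ≤ n + 2))).symm.toAlgHom).comp
        (cohenTower R I n)) b
  rw [show (cohenTower R I (n+1) : _ →ₐ[R] _) = Algebra.FormallySmooth.lift
      ((I ^ (n+1)).map (Ideal.Quotient.mkₐ R (I ^ (n+2)))) (cohenNil R I n)
      (((DoubleQuot.quotQuotEquivQuotOfLEₐ (R := R)
          (Ideal.pow_le_pow_right (by omega : n + 1 ≤ n + 2))).symm.toAlgHom).comp
        (cohenTower R I n)) from rfl] at ha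
  rw [← ha] at h
  have h2 := congrArg (DoubleQuot.quotQuotEquivQuotOfLEₐ (R := R)
      (Ideal.pow_le_pow_right (by omega : n + 1 ≤ n + 2))) h
  refine Eq.trans ?_ (h2.trans ?_)
  · exact (DoubleQuot.quotQuotEquivQuotOfLE_quotQuotMk a
      (Ideal.pow_le_pow_right (by omega : n + 1 ≤ n + 2))).symm
  · exact AlgEquiv.apply_symm_apply _ _

theorem cohenTower_chain (I : Ideal A) [Algebra.FormallySmooth R (A ⧸ I)] :
    ∀ n m : ℕ, m ≤ n → ∀ b (a : A), Ideal.Quotient.mk (I ^ (n+1)) a = cohenTower R I n b →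
      Ideal.Quotient.mk (I ^ (m+1)) a = cohenTower R I m b := by
  intro n
  induction n with
  | zero =>
    intro m hm b a ha
    rw [Nat.le_zero.mp hm] at *
    exact ha
  | succ k ih =>
    intro m hm b a ha
    rcases Nat.lt_or_ge m (k+1) with h | h
    · exact ih m (by omega) b a (cohenTower_compat R I k b a ha)
    · have : m = k + 1 := by omega
      subst this; exact ha

theorem cohen_exists_section (I : Ideal A) [IsAdicComplete I A]
    [Algebra.FormallySmooth R (A ⧸ I)] :
    ∃ σ : (A ⧸ I) →ₐ[R] A, ∀ b, Ideal.Quotient.mk I (σ b) = b := by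
  have smul_top : ∀ n : ℕ, (I ^ n • ⊤ : Ideal A) = I ^ n := fun n => by
    rw [← Ideal.one_eq_top, Ideal.smul_eq_mul, mul_one]
  have haus : ∀ z : A, (∀ n : ℕ, z ∈ I ^ n) → z = 0 := by
    intro z hz
    refine IsHausdorff.haus (inferInstance : IsHausdorff I A) z fun n => ?_
    rw [SModEq.zero, smul_top]
    exact hz n
  have key : ∀ b : A ⧸ I, ∃ s : A,
      ∀ n, Ideal.Quotient.mk (I ^ (n+1)) s = cohenTower R I n b := by
    intro b
    have hout : ∀ n, Ideal.Quotient.mk (I ^ (n+1)) (Quotient.out (cohenTower R I n b)) =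
        cohenTower R I n b := fun n => Quotient.out_eq _
    have cauchy : ∀ {m n : ℕ}, m ≤ n →
        Quotient.out (cohenTower R I m b) ≡ Quotient.out (cohenTower R I n b)
          [SMOD (I ^ m • ⊤ : Ideal A)] := by
      intro m n hmn
      rw [SModEq.sub_mem, smul_top]
      have h1 : Ideal.Quotient.mk (I ^ (m+1)) (Quotient.out (cohenTower R I n b)) =
          cohenTower R I m b := cohenTower_chain R I n m hmn b _ (hout n)
      have h2 := hout m
      have := Ideal.Quotient.eq.mp (h2.trans h1.symm)
      exact Ideal.pow_le_pow_right (by omega) this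
    obtain ⟨L, hL⟩ := IsPrecomplete.prec (IsAdicComplete.toIsPrecomplete : IsPrecomplete I A)
      (f := fun n => Quotient.out (cohenTower R I n b)) cauchy
    refine ⟨L, fun n => ?_⟩
    have h1 := hL (n+1)
    rw [SModEq.sub_mem, smul_top] at h1
    have h2 : Ideal.Quotient.mk (I ^ (n+1)) L =
        Ideal.Quotient.mk (I ^ (n+1)) (Quotient.out (cohenTower R I (n+1) b)) :=
      Ideal.Quotient.eq.mpr (by simpa using neg_mem (Ideal.pow_le_pow_right (by omega) h1))
    rw [h2]
    exact cohenTower_chain R I (n+1) n (by omega) b _ (hout (n+1))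
  choose σ0 hσ0 using key
  have hom_aux : ∀ z : A, (∀ n : ℕ, Ideal.Quotient.mk (I ^ (n+1)) z = 0) → z = 0 := by
    intro z hz
    refine haus z fun n => ?_
    exact Ideal.pow_le_pow_right (by omega)
      (Ideal.Quotient.eq_zero_iff_mem.mp (hz n))
  have hone : σ0 1 = 1 := by
    refine sub_eq_zero.mp (hom_aux _ fun n => ?_)
    rw [map_sub, hσ0, map_one, map_one, sub_self]
  have hmul : ∀ b c, σ0 (b * c) = σ0 b * σ0 c := by
    intro b c
    refine sub_eq_zero.mp (hom_aux _ fun n => ?_)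
    rw [map_sub, map_mul, hσ0, hσ0, hσ0, map_mul, sub_self]
  have hzero : σ0 0 = 0 := by
    refine sub_eq_zero.mp (hom_aux _ fun n => ?_)
    rw [map_sub, hσ0, map_zero, map_zero, sub_self]
  have hadd : ∀ b c, σ0 (b + c) = σ0 b + σ0 c := by
    intro b c
    refine sub_eq_zero.mp (hom_aux _ fun n => ?_)
    rw [map_sub, map_add, hσ0, hσ0, hσ0, map_add, sub_self]
  have hcomm : ∀ r : R, σ0 (algebraMap R (A ⧸ I) r) = algebraMap R A r := by
    intro r
    refine sub_eq_zero.mp (hom_aux _ fun n => ?_)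
    rw [map_sub, hσ0, AlgHom.commutes, Ideal.Quotient.mk_algebraMap, sub_self]
  have hsec : ∀ b, Ideal.Quotient.mk I (σ0 b) = b := by
    intro b
    obtain ⟨a, rfl⟩ := Ideal.Quotient.mk_surjective b
    have h0 := hσ0 (Ideal.Quotient.mk I a) 0
    simp only [cohenTower, AlgEquiv.toAlgHom_eq_coe, AlgHom.coe_coe,
      Ideal.quotientEquivAlgOfEq_mk] at h0
    have h1 := Ideal.Quotient.eq.mp h0
    rw [pow_one] at h1
    exact Ideal.Quotient.eq.mpr h1
  exact ⟨{ toFun := σ0, map_one' := hone, map_mul' := hmul, map_zero' := hzero,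
           map_add' := hadd, commutes' := hcomm }, hsec⟩

end CohenAux

/-- Cohen-type structure lemma: `A` noetherian, `x`-adically complete for a
nonzerodivisor `x`, `R` a subring of `A` (an injective algebra), and `B = A/xA`
formally smooth over `R`. Then there is an `R`-algebra isomorphism `A ≅ B⟦x⟧`
sending `x` to `x`, whose composition with the reduction `B⟦x⟧ → B` is the
quotient map `A → A/xA = B`. -/
theorem cohen_structure_power_series
    {R A : Type u} [CommRing R] [CommRing A] [IsNoetherianRing A] [Algebra R A]
    (hinj : Function.Injective (algebraMap R A))
    (x : A) (hx : x ∈ nonZeroDivisors A)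
    [IsAdicComplete (Ideal.span {x}) A]
    [Algebra.FormallySmooth R (A ⧸ Ideal.span {x})] :
    ∃ e : A ≃ₐ[R] PowerSeries (A ⧸ Ideal.span {x}),
      e x = PowerSeries.X ∧
      ∀ a : A, PowerSeries.constantCoeff (e a) =
        Ideal.Quotient.mk (Ideal.span {x}) a := by
  classical
  set I : Ideal A := Ideal.span {x} with hIdef
  obtain ⟨σ, hσ⟩ := cohen_exists_section R I
  -- basic helpers
  have smul_top : ∀ n : ℕ, (I ^ n • ⊤ : Ideal A) = I ^ n := fun n => by
    rw [← Ideal.one_eq_top, Ideal.smul_eq_mul, mul_one]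
  have haus : ∀ z : A, (∀ n : ℕ, z ∈ I ^ n) → z = 0 := by
    intro z hz
    refine IsHausdorff.haus (inferInstance : IsHausdorff I A) z fun n => ?_
    rw [SModEq.zero, smul_top]
    exact hz n
  have eqz : ∀ z w : A, (∀ n : ℕ, z - w ∈ I ^ n) → z = w := fun z w h =>
    sub_eq_zero.mp (haus _ h)
  have hmem : ∀ (n i : ℕ) (c : A), n ≤ i → c * x ^ i ∈ I ^ n := by
    intro n i c h
    rw [hIdef, Ideal.span_singleton_pow, Ideal.mem_span_singleton]
    exact dvd_trans (pow_dvd_pow x h) (dvd_mul_left _ _)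
  -- the evaluation approximations
  set B := A ⧸ I with hBdef
  set E : ℕ → PowerSeries B → A :=
    fun n f => Polynomial.eval₂ (σ : B →+* A) x (PowerSeries.trunc n f) with hEdef
  have hE : ∀ n f, E n f = ∑ i ∈ Finset.range n, σ (PowerSeries.coeff i f) * x ^ i :=
    fun n f => PowerSeries.eval₂_trunc_eq_sum_range x (σ : B →+* A) n f
  -- Cauchy property and limits
  have key : ∀ f : PowerSeries B, ∃ L : A, ∀ n, L - E n f ∈ I ^ n := by
    intro f
    have cauchy : ∀ {m n : ℕ}, m ≤ n → E m f ≡ E n f [SMOD (I ^ m • ⊤ : Ideal A)] := by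
      intro m n hmn
      rw [SModEq.sub_mem, smul_top]
      have hsplit : E n f - E m f = ∑ i ∈ Finset.Ico m n, σ (PowerSeries.coeff i f) * x ^ i := by
        rw [hE, hE, Finset.sum_Ico_eq_sub _ hmn]
      have : E n f - E m f ∈ I ^ m := by
        rw [hsplit]
        exact Ideal.sum_mem _ fun i hi =>
          hmem m i _ (Finset.mem_Ico.mp hi).1
      simpa using neg_mem this
    obtain ⟨L, hL⟩ := IsPrecomplete.prec (IsAdicComplete.toIsPrecomplete : IsPrecomplete I A)
      (f := fun n => E n f) cauchy
    refine ⟨L, fun n => ?_⟩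
    have h1 := hL n
    rw [SModEq.sub_mem, smul_top] at h1
    simpa using neg_mem h1
  choose ψ0 hψ0 using key
  -- the polynomial-truncation lemma
  have L1 : ∀ (p : Polynomial B) (n : ℕ),
      Polynomial.eval₂ (σ : B →+* A) x p -
        Polynomial.eval₂ (σ : B →+* A) x (PowerSeries.trunc n (p : PowerSeries B)) ∈ I ^ n := by
    intro p n
    set N := max n (p.natDegree + 1) with hN
    have hdeg : p.natDegree < N := lt_of_lt_of_le (Nat.lt_succ_self _) (le_max_right _ _)
    have h1 : Polynomial.eval₂ (σ : B →+* A) x p =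
        ∑ i ∈ Finset.range N, σ (p.coeff i) * x ^ i :=
      Polynomial.eval₂_eq_sum_range' _ hdeg x
    have h2 : Polynomial.eval₂ (σ : B →+* A) x (PowerSeries.trunc n (p : PowerSeries B)) =
        ∑ i ∈ Finset.range n, σ (p.coeff i) * x ^ i := by
      rw [PowerSeries.eval₂_trunc_eq_sum_range]
      exact Finset.sum_congr rfl fun i _ => by rw [Polynomial.coeff_coe]; rfl
    rw [h1, h2, ← Finset.sum_Ico_eq_sub _ (le_max_left n _)]
    exact Ideal.sum_mem _ fun i hi => hmem n i _ (Finset.mem_Ico.mp hi).1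
  -- hom properties of ψ0
  have hone : ψ0 1 = 1 := by
    refine eqz _ _ fun n => ?_
    have h1 : ψ0 1 - E (n+1) 1 ∈ I ^ (n+1) := hψ0 1 (n+1)
    have h2 : E (n+1) 1 = 1 := by
      rw [hEdef]
      simp [PowerSeries.trunc_one]
    rw [h2] at h1
    exact Ideal.pow_le_pow_right (by omega) h1
  have hzero : ψ0 0 = 0 := by
    refine eqz _ _ fun n => ?_
    have h1 : ψ0 0 - E n 0 ∈ I ^ n := hψ0 0 n
    have h2 : E n 0 = 0 := by
      rw [hEdef]; simp
    rw [h2] at h1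
    simpa using h1
  have hadd : ∀ f g, ψ0 (f + g) = ψ0 f + ψ0 g := by
    intro f g
    refine eqz _ _ fun n => ?_
    have h2 : E n (f + g) = E n f + E n g := by
      rw [hEdef]
      simp [map_add, Polynomial.eval₂_add]
    have : ψ0 (f + g) - (ψ0 f + ψ0 g) =
        (ψ0 (f + g) - E n (f + g)) - ((ψ0 f - E n f) + (ψ0 g - E n g)) := by
      rw [h2]; ring
    rw [this]
    exact sub_mem (hψ0 _ n) (add_mem (hψ0 _ n) (hψ0 _ n))
  have hmul : ∀ f g, ψ0 (f * g) = ψ0 f * ψ0 g := by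
    intro f g
    refine eqz _ _ fun n => ?_
    have hEfg : E n (f * g) =
        Polynomial.eval₂ (σ : B →+* A) x
          (PowerSeries.trunc n (((PowerSeries.trunc n f : Polynomial B) *
            (PowerSeries.trunc n g : Polynomial B) : Polynomial B) : PowerSeries B)) := by
      show Polynomial.eval₂ (σ : B →+* A) x (PowerSeries.trunc n (f * g)) = _
      rw [Polynomial.coe_mul, PowerSeries.trunc_trunc_mul_trunc]
    have h2 : E n f * E n g - E n (f * g) ∈ I ^ n := by
      rw [hEdef]
      show Polynomial.eval₂ (σ : B →+* A) x (PowerSeries.trunc n f) *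
        Polynomial.eval₂ (σ : B →+* A) x (PowerSeries.trunc n g) - _ ∈ I ^ n
      rw [← Polynomial.eval₂_mul, ← hEdef, hEfg]
      exact L1 _ n
    have hsplit : ψ0 (f * g) - ψ0 f * ψ0 g =
        (ψ0 (f * g) - E n (f * g)) - (ψ0 f * (ψ0 g - E n g) + (ψ0 f - E n f) * E n g)
          - (E n f * E n g - E n (f * g)) := by ring
    rw [hsplit]
    exact sub_mem (sub_mem (hψ0 _ n)
      (add_mem (Ideal.mul_mem_left _ _ (hψ0 _ n)) (Ideal.mul_mem_right _ _ (hψ0 _ n)))) h2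
  have hcomm : ∀ r : R, ψ0 (algebraMap R (PowerSeries B) r) = algebraMap R A r := by
    intro r
    refine eqz _ _ fun n => ?_
    have h1 := hψ0 (algebraMap R (PowerSeries B) r) (n+1)
    have h2 : E (n+1) (algebraMap R (PowerSeries B) r) = algebraMap R A r := by
      rw [PowerSeries.algebraMap_apply]
      show Polynomial.eval₂ (σ : B →+* A) x
        (PowerSeries.trunc (n+1) (PowerSeries.C (algebraMap R B r))) = _
      rw [PowerSeries.trunc_C, Polynomial.eval₂_C]
      exact σ.commutes r
    rw [h2] at h1
    exact Ideal.pow_le_pow_right (by omega) h1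
  set ψ : PowerSeries B →ₐ[R] A :=
    { toFun := ψ0, map_one' := hone, map_mul' := hmul, map_zero' := hzero,
      map_add' := hadd, commutes' := hcomm } with hψdef
  have hψ : ∀ f n, ψ f - E n f ∈ I ^ n := hψ0
  -- ψ X = x
  have hψX : ψ PowerSeries.X = x := by
    refine eqz _ _ fun n => ?_
    have h1 := hψ PowerSeries.X (n+2)
    have h2 : E (n+2) (PowerSeries.X : PowerSeries B) = x := by
      show Polynomial.eval₂ (σ : B →+* A) x (PowerSeries.trunc (n+2) PowerSeries.X) = x
      rw [PowerSeries.trunc_X, Polynomial.eval₂_X]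
    rw [h2] at h1
    exact Ideal.pow_le_pow_right (by omega) h1
  -- constant coefficient
  have hconst : ∀ f, Ideal.Quotient.mk I (ψ f) = PowerSeries.constantCoeff f := by
    intro f
    have h1 := hψ f 1
    rw [pow_one] at h1
    have h2 : E 1 f = σ (PowerSeries.constantCoeff f) := by
      rw [hE, Finset.sum_range_one]
      simp
    have h3 : Ideal.Quotient.mk I (ψ f) = Ideal.Quotient.mk I (E 1 f) :=
      Ideal.Quotient.eq.mpr h1
    rw [h3, h2, hσ]
  -- injectivity
  have hcoeff0 : ∀ f, ψ f = 0 → PowerSeries.constantCoeff f = 0 := by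
    intro f hf
    rw [← hconst f, hf, map_zero]
  have hcoeff : ∀ (n : ℕ) (f), ψ f = 0 → PowerSeries.coeff n f = 0 := by
    intro n
    induction n with
    | zero => intro f hf; simpa using hcoeff0 f hf
    | succ k ih =>
      intro f hf
      obtain ⟨g, rfl⟩ := PowerSeries.X_dvd_iff.mpr (hcoeff0 f hf)
      have hg : ψ g = 0 := by
        rw [map_mul, hψX] at hf
        exact mem_nonZeroDivisors_iff_right.mp hx _ (by rwa [mul_comm] at hf)
      rw [PowerSeries.coeff_succ_X_mul]
      exact ih g hg
  have hinjψ : Function.Injective ψ := by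
    intro f g h
    have : ψ (f - g) = 0 := by rw [map_sub, h, sub_self]
    have hz : f - g = 0 := PowerSeries.ext fun n => by
      rw [map_zero]; exact hcoeff n _ this
    exact sub_eq_zero.mp hz
  -- surjectivity
  have hsurjψ : Function.Surjective ψ := by
    intro a
    have step : ∀ c : A, ∃ c' : A, c - σ (Ideal.Quotient.mk I c) = x * c' := by
      intro c
      have hmem0 : c - σ (Ideal.Quotient.mk I c) ∈ I := by
        rw [← Ideal.Quotient.eq_zero_iff_mem, map_sub, hσ, sub_self]
      obtain ⟨c', hc'⟩ := Ideal.mem_span_singleton.mp hmem0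
      exact ⟨c', hc'⟩
    choose nxt hnxt using step
    set d : ℕ → A := fun i => Nat.rec a (fun _ c => nxt c) i with hd
    set f : PowerSeries B := PowerSeries.mk fun i => Ideal.Quotient.mk I (d i) with hf
    have hdig : ∀ n : ℕ, a - E n f = x ^ n * d n := by
      intro n
      induction n with
      | zero =>
        rw [hE]
        simp [hd]
      | succ k ihk =>
        have hEsucc : E (k+1) f = E k f + σ (Ideal.Quotient.mk I (d k)) * x ^ k := by
          rw [hE, hE, Finset.sum_range_succ, hf]
          simp
        have hdsucc : d (k+1) = nxt (d k) := rfl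
        rw [hEsucc, hdsucc]
        have := hnxt (d k)
        calc a - (E k f + σ (Ideal.Quotient.mk I (d k)) * x ^ k)
            = (a - E k f) - σ (Ideal.Quotient.mk I (d k)) * x ^ k := by ring
          _ = x ^ k * d k - σ (Ideal.Quotient.mk I (d k)) * x ^ k := by rw [ihk]
          _ = x ^ k * (d k - σ (Ideal.Quotient.mk I (d k))) := by ring
          _ = x ^ k * (x * nxt (d k)) := by rw [this]
          _ = x ^ (k+1) * nxt (d k) := by ring
    refine ⟨f, eqz _ _ fun n => ?_⟩
    have h1 : ψ f - E n f ∈ I ^ n := hψ f n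
    have h2 : a - E n f ∈ I ^ n := by
      rw [hdig n, mul_comm]
      exact hmem n n _ le_rfl
    have : ψ f - a = (ψ f - E n f) - (a - E n f) := by ring
    rw [this]
    exact sub_mem h1 h2
  -- assemble
  let E' : PowerSeries B ≃ₐ[R] A := AlgEquiv.ofBijective ψ ⟨hinjψ, hsurjψ⟩
  refine ⟨E'.symm, ?_, ?_⟩
  · rw [AlgEquiv.symm_apply_eq]
    show x = ψ PowerSeries.X
    rw [hψX]
  · intro a
    have h1 : ψ (E'.symm a) = a := E'.apply_symm_apply a
    rw [← hconst (E'.symm a), h1]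
end
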